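/- arXiv:2007.07494 — 4 statements merged into one kernel-verified Lean document; each statement's English description precedes it below -/
import Mathlib

section
/- Let X be a random vector taking finitely many values in ℝ^m, let a, b be two points in ℝ^m, and let v ∈ ℝ^m. Then v^T·Cov(X)·v ≥ P[X = a]·P[X = b]·⟨v, a − b⟩². -/
open Classical in
theorem stmt_5 {m : ℕ} {Ω : Type*} [Fintype Ω] (P : Ω → ℝ) (hP : ∀ ω, 0 ≤ P ω)
    (hsum : ∑ ω, P ω = 1) (X : Ω → Fin m → ℝ) (a b v : Fin m → ℝ) :
    ∑ ω, P ω * ((∑ i, v i * X ω i) - ∑ ω', P ω' * ∑ i, v i * X ω' i) ^ 2 ≥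
      (∑ ω, if X ω = a then P ω else 0) * (∑ ω, if X ω = b then P ω else 0) *
        (∑ i, v i * (a i - b i)) ^ 2 := by
  set Y : Ω → ℝ := fun ω => ∑ i, v i * X ω i with hY
  set μ : ℝ := ∑ ω', P ω' * Y ω' with hμ
  set ya : ℝ := ∑ i, v i * a i with hya
  set yb : ℝ := ∑ i, v i * b i with hyb
  have hvab : (∑ i, v i * (a i - b i)) = ya - yb := by
    simp only [mul_sub, Finset.sum_sub_distrib, hya, hyb]
  by_cases hab : a = b
  · subst hab
    have : (∑ i, v i * (a i - a i)) = 0 := by simp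
    rw [this]
    have : (0:ℝ) ≤ ∑ ω, P ω * (Y ω - μ) ^ 2 :=
      Finset.sum_nonneg fun ω _ => mul_nonneg (hP ω) (sq_nonneg _)
    simpa using this
  · rw [hvab]
    set Sa := Finset.univ.filter (fun ω => X ω = a) with hSa
    set Sb := Finset.univ.filter (fun ω => X ω = b) with hSb
    have hdisj : Disjoint Sa Sb := by
      rw [Finset.disjoint_filter]
      intro ω _ h1 h2
      exact hab (h1 ▸ h2 ▸ rfl)
    have hpa : (∑ ω, if X ω = a then P ω else 0) = ∑ ω ∈ Sa, P ω :=
      (Finset.sum_filter _ _).symm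
    have hpb : (∑ ω, if X ω = b then P ω else 0) = ∑ ω ∈ Sb, P ω :=
      (Finset.sum_filter _ _).symm
    set pa : ℝ := ∑ ω ∈ Sa, P ω with hpa'
    set pb : ℝ := ∑ ω ∈ Sb, P ω with hpb'
    rw [hpa, hpb]
    have hpa0 : 0 ≤ pa := Finset.sum_nonneg fun ω _ => hP ω
    have hpb0 : 0 ≤ pb := Finset.sum_nonneg fun ω _ => hP ω
    have hle1 : pa + pb ≤ 1 := by
      rw [← hsum, ← Finset.sum_union hdisj]
      exact Finset.sum_le_sum_of_subset_of_nonneg (Finset.subset_univ _)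
        (fun ω _ _ => hP ω)
    have hstep : ∑ ω, P ω * (Y ω - μ) ^ 2 ≥
        pa * (ya - μ) ^ 2 + pb * (yb - μ) ^ 2 := by
      have hSa_sum : ∑ ω ∈ Sa, P ω * (Y ω - μ) ^ 2 = pa * (ya - μ) ^ 2 := by
        rw [hpa', Finset.sum_mul]
        apply Finset.sum_congr rfl
        intro ω hω
        have : X ω = a := (Finset.mem_filter.mp hω).2
        simp [hY, hya, this]
      have hSb_sum : ∑ ω ∈ Sb, P ω * (Y ω - μ) ^ 2 = pb * (yb - μ) ^ 2 := by
        rw [hpb', Finset.sum_mul]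
        apply Finset.sum_congr rfl
        intro ω hω
        have : X ω = b := (Finset.mem_filter.mp hω).2
        simp [hY, hyb, this]
      calc ∑ ω, P ω * (Y ω - μ) ^ 2
          ≥ ∑ ω ∈ Sa ∪ Sb, P ω * (Y ω - μ) ^ 2 :=
            Finset.sum_le_sum_of_subset_of_nonneg (Finset.subset_univ _)
              (fun ω _ _ => mul_nonneg (hP ω) (sq_nonneg _))
        _ = pa * (ya - μ) ^ 2 + pb * (yb - μ) ^ 2 := by
            rw [Finset.sum_union hdisj, hSa_sum, hSb_sum]
    have key : pa * (ya - μ) ^ 2 + pb * (yb - μ) ^ 2 ≥ pa * pb * (ya - yb) ^ 2 := by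
      nlinarith [sq_nonneg (pa * (ya - μ) + pb * (yb - μ)),
        mul_nonneg hpa0 (sq_nonneg (ya - μ)), mul_nonneg hpb0 (sq_nonneg (yb - μ))]
    linarith
end

section
/- Let Ω be a finite set of size q ≥ 1, let k ≥ 1, and let ν be a probability distribution on Ω^k satisfying the balance condition: for every probability distribution μ on Ω, ∑_{σ∈Ω^k} ν(σ)·∏_{i=1}^k μ(σ_i) ≤ q^{−k}. Then for every probability distribution p on Ω^k, KL(p‖ν) ≥ k·KL(p̄‖u), where p̄(ω) = (1/k)·∑_{i=1}^k ∑_{σ∈Ω^k} p(σ)·1{σ_i = ω} is the average marginal of p and u is the uniform distribution on Ω. -/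
open Classical in
theorem stmt_11 {Ω : Type*} [Fintype Ω] (q k : ℕ) (hq : 1 ≤ q) (hk : 1 ≤ k)
    (hcard : Fintype.card Ω = q)
    (ν : (Fin k → Ω) → ℝ) (hν : ∀ σ, 0 ≤ ν σ) (hνsum : ∑ σ, ν σ = 1)
    (hbal : ∀ μ : Ω → ℝ, (∀ ω, 0 ≤ μ ω) → ∑ ω, μ ω = 1 →
      ∑ σ, ν σ * ∏ i, μ (σ i) ≤ (q : ℝ) ^ (-(k : ℤ)))
    (p : (Fin k → Ω) → ℝ) (hp : ∀ σ, 0 ≤ p σ) (hpsum : ∑ σ, p σ = 1) :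
    let pbar := fun ω : Ω =>
      (1 / (k : ℝ)) * ∑ i : Fin k, ∑ σ, p σ * (if σ i = ω then 1 else 0)
    (((k : ℝ) * ∑ ω, pbar ω * Real.log (pbar ω / (1 / q)) : ℝ) : EReal) ≤
      (if ∀ σ, ν σ = 0 → p σ = 0
        then ((∑ σ, p σ * Real.log (p σ / ν σ) : ℝ) : EReal)
        else (⊤ : EReal)) := by
  intro pbar
  by_cases hac : ∀ σ, ν σ = 0 → p σ = 0
  swap
  · simp [hac]
  rw [if_pos hac, EReal.coe_le_coe_iff]
  have hkpos : (0:ℝ) < k := by exact_mod_cast hk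
  have hqpos : (0:ℝ) < q := by exact_mod_cast hq
  have hpbar_nonneg : ∀ ω, 0 ≤ pbar ω := by
    intro ω
    apply mul_nonneg (by positivity)
    apply Finset.sum_nonneg; intro i _
    apply Finset.sum_nonneg; intro σ _
    have := hp σ; positivity
  have hpbar_sum : ∑ ω, pbar ω = 1 := by
    simp only [pbar]
    rw [← Finset.mul_sum, Finset.sum_comm]
    have : ∀ i : Fin k, ∑ ω, ∑ σ, p σ * (if σ i = ω then (1:ℝ) else 0) = 1 := by
      intro i
      rw [Finset.sum_comm]
      have : ∀ σ : Fin k → Ω, ∑ ω, p σ * (if σ i = ω then (1:ℝ) else 0) = p σ := by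
        intro σ
        rw [← Finset.mul_sum]
        simp
      simp only [this, hpsum]
    simp only [this, Finset.sum_const, Finset.card_univ, Fintype.card_fin, nsmul_eq_mul,
      mul_one]
    field_simp
  have hpbar_pos : ∀ σ, 0 < p σ → ∀ i, 0 < pbar (σ i) := by
    intro σ hσ i
    have h1 : p σ ≤ ∑ σ', p σ' * (if σ' i = σ i then (1:ℝ) else 0) := by
      have h := Finset.single_le_sum
        (f := fun σ' => p σ' * (if σ' i = σ i then (1:ℝ) else 0))
        (fun σ' _ => by have := hp σ'; positivity) (Finset.mem_univ σ)
      simpa using h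
    have h2 : p σ ≤ ∑ j : Fin k, ∑ σ', p σ' * (if σ' j = σ i then (1:ℝ) else 0) := by
      refine le_trans h1 (Finset.single_le_sum
        (f := fun j => ∑ σ', p σ' * (if σ' j = σ i then (1:ℝ) else 0)) ?_ (Finset.mem_univ i))
      intro j _
      apply Finset.sum_nonneg; intro σ' _; have := hp σ'; positivity
    calc (0:ℝ) < (1/(k:ℝ)) * p σ := by positivity
      _ ≤ pbar (σ i) := mul_le_mul_of_nonneg_left h2 (by positivity)
  set m : (Fin k → Ω) → ℝ := fun σ => ν σ * ∏ i, (pbar (σ i) * (q:ℝ)) with hm_def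
  have hm_nonneg : ∀ σ, 0 ≤ m σ := fun σ => mul_nonneg (hν σ)
    (Finset.prod_nonneg fun i _ => mul_nonneg (hpbar_nonneg _) hqpos.le)
  have hbal' := hbal pbar hpbar_nonneg hpbar_sum
  have hmsum : ∑ σ, m σ ≤ 1 := by
    have heq : ∑ σ, m σ = (q:ℝ)^k * ∑ σ, ν σ * ∏ i, pbar (σ i) := by
      rw [Finset.mul_sum]
      refine Finset.sum_congr rfl fun σ _ => ?_
      have e1 : ∏ i, (pbar (σ i) * (q:ℝ)) = (∏ i, pbar (σ i)) * ∏ _i : Fin k, (q:ℝ) :=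
        Finset.prod_mul_distrib
      have e2 : ∏ _i : Fin k, (q:ℝ) = (q:ℝ)^k := by
        rw [Finset.prod_const, Finset.card_univ, Fintype.card_fin]
      calc m σ = ν σ * ∏ i, (pbar (σ i) * (q:ℝ)) := rfl
        _ = ν σ * ((∏ i, pbar (σ i)) * (q:ℝ)^k) := by rw [e1, e2]
        _ = (q:ℝ)^k * (ν σ * ∏ i, pbar (σ i)) := by ring
    rw [heq]
    calc (q:ℝ)^k * ∑ σ, ν σ * ∏ i, pbar (σ i) ≤ (q:ℝ)^k * (q:ℝ)^(-(k:ℤ)) :=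
          mul_le_mul_of_nonneg_left hbal' (by positivity)
      _ = 1 := by
          rw [zpow_neg, zpow_natCast]
          field_simp
  have key : ∀ σ, p σ * ∑ i, Real.log (pbar (σ i) * q) + (p σ - m σ)
      ≤ p σ * Real.log (p σ / ν σ) := by
    intro σ
    rcases (hp σ).eq_or_lt with h0 | hpos
    · rw [← h0]
      simpa using hm_nonneg σ
    · have hνσ : 0 < ν σ := lt_of_le_of_ne (hν σ) fun h => hpos.ne' (hac σ h.symm)
      have hfac : ∀ i : Fin k, 0 < pbar (σ i) * (q:ℝ) :=
        fun i => mul_pos (hpbar_pos σ hpos i) hqpos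
      have hprod : 0 < ∏ i, pbar (σ i) * (q:ℝ) := Finset.prod_pos fun i _ => hfac i
      have hmσ : 0 < m σ := mul_pos hνσ hprod
      have hlogm : Real.log (m σ) = Real.log (ν σ) + ∑ i, Real.log (pbar (σ i) * q) := by
        rw [hm_def, Real.log_mul hνσ.ne' hprod.ne', Real.log_prod]
        intro i _; exact (hfac i).ne'
      have hgibbs : p σ - m σ ≤ p σ * (Real.log (p σ) - Real.log (m σ)) := by
        have h := Real.log_le_sub_one_of_pos (show 0 < m σ / p σ by positivity)
        rw [Real.log_div hmσ.ne' hpos.ne'] at h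
        have h2 : p σ * (Real.log (m σ) - Real.log (p σ)) ≤ p σ * (m σ / p σ - 1) :=
          mul_le_mul_of_nonneg_left h (hp σ)
        have h3 : p σ * (m σ / p σ - 1) = m σ - p σ := by field_simp
        nlinarith
      rw [Real.log_div hpos.ne' hνσ.ne']
      nlinarith [hgibbs, hlogm]
  have hkey_sum : ∑ σ, (p σ * ∑ i, Real.log (pbar (σ i) * q) + (p σ - m σ))
      ≤ ∑ σ, p σ * Real.log (p σ / ν σ) := Finset.sum_le_sum fun σ _ => key σ
  rw [Finset.sum_add_distrib, Finset.sum_sub_distrib, hpsum] at hkey_sum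
  have hident : ∑ σ, p σ * ∑ i, Real.log (pbar (σ i) * q)
      = (k:ℝ) * ∑ ω, pbar ω * Real.log (pbar ω * q) := by
    have step1 : ∀ (σ : Fin k → Ω) (i : Fin k), p σ * Real.log (pbar (σ i) * q)
        = ∑ ω, p σ * (if σ i = ω then (1:ℝ) else 0) * Real.log (pbar ω * q) := by
      intro σ i
      rw [Finset.sum_eq_single (σ i)]
      · simp
      · intro ω _ hω; simp [Ne.symm hω]
      · simp
    calc ∑ σ, p σ * ∑ i, Real.log (pbar (σ i) * q)
        = ∑ σ, ∑ i, p σ * Real.log (pbar (σ i) * q) := by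
          simp [Finset.mul_sum]
      _ = ∑ i, ∑ σ, p σ * Real.log (pbar (σ i) * q) := Finset.sum_comm
      _ = ∑ i, ∑ σ, ∑ ω, p σ * (if σ i = ω then (1:ℝ) else 0) * Real.log (pbar ω * q) := by
          exact Finset.sum_congr rfl fun i _ => Finset.sum_congr rfl fun σ _ => step1 σ i
      _ = ∑ i : Fin k, ∑ ω, ∑ σ, p σ * (if σ i = ω then (1:ℝ) else 0)
            * Real.log (pbar ω * q) := by
          exact Finset.sum_congr rfl fun i _ => Finset.sum_comm
      _ = ∑ ω, ∑ i : Fin k, ∑ σ, p σ * (if σ i = ω then (1:ℝ) else 0)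
            * Real.log (pbar ω * q) := Finset.sum_comm
      _ = ∑ ω, (∑ i : Fin k, ∑ σ, p σ * (if σ i = ω then (1:ℝ) else 0))
            * Real.log (pbar ω * q) := by
          refine Finset.sum_congr rfl fun ω _ => ?_
          rw [Finset.sum_mul]
          refine Finset.sum_congr rfl fun i _ => ?_
          rw [Finset.sum_mul]
      _ = ∑ ω, ((k:ℝ) * pbar ω) * Real.log (pbar ω * q) := by
          refine Finset.sum_congr rfl fun ω _ => ?_
          congr 1
          simp only [pbar]
          field_simp
      _ = (k:ℝ) * ∑ ω, pbar ω * Real.log (pbar ω * q) := by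
          rw [Finset.mul_sum]
          exact Finset.sum_congr rfl fun ω _ => by ring
  have hdiv : ∀ ω, pbar ω / (1/(q:ℝ)) = pbar ω * q := fun ω => by rw [one_div, div_eq_mul_inv, inv_inv]
  simp only [hdiv]
  rw [← hident]
  linarith
end

section
/- Let Ω be a finite set of size q ≥ 2, let d ≥ 1, and let μ be a probability distribution on Ω^d such that μ(ω,ω,…,ω) > 0 for every constant string (ω,…,ω) with ω ∈ Ω. For a fully supported probability distribution π on Ω define the tilt μ_π(σ) = μ(σ)·∏_{h=1}^d π(σ_h)/Z_π, Z_π = ∑_τ μ(τ)∏_h π(τ_h). If π and π′ are fully supported and μ_π = μ_{π′}, then π = π′. -/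
theorem stmt_14 {Ω : Type*} [Fintype Ω] (q d : ℕ) (hq : 2 ≤ q) (hd : 1 ≤ d)
    (hcard : Fintype.card Ω = q)
    (μ : (Fin d → Ω) → ℝ) (hμ : ∀ σ, 0 ≤ μ σ) (hμsum : ∑ σ, μ σ = 1)
    (hconst : ∀ ω : Ω, 0 < μ (fun _ => ω))
    (π π' : Ω → ℝ) (hπ : ∀ ω, 0 < π ω) (hπsum : ∑ ω, π ω = 1)
    (hπ' : ∀ ω, 0 < π' ω) (hπ'sum : ∑ ω, π' ω = 1)
    (heq : (fun σ : Fin d → Ω => μ σ * (∏ h, π (σ h)) / ∑ τ, μ τ * ∏ h, π (τ h)) =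
      (fun σ : Fin d → Ω => μ σ * (∏ h, π' (σ h)) / ∑ τ, μ τ * ∏ h, π' (τ h))) :
    π = π' := by
  have hne : Nonempty Ω := by
    rw [← Fintype.card_pos_iff, hcard]; omega
  obtain ⟨ω₀⟩ := hne
  set Z := ∑ τ, μ τ * ∏ h, π (τ h) with hZ
  set Z' := ∑ τ, μ τ * ∏ h, π' (τ h) with hZ'
  have hZpos : 0 < Z := by
    apply Finset.sum_pos' (fun τ _ => mul_nonneg (hμ τ) (Finset.prod_nonneg fun h _ => (hπ _).le))
    exact ⟨fun _ => ω₀, Finset.mem_univ _,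
      mul_pos (hconst ω₀) (Finset.prod_pos fun h _ => hπ _)⟩
  have hZ'pos : 0 < Z' := by
    apply Finset.sum_pos' (fun τ _ => mul_nonneg (hμ τ) (Finset.prod_nonneg fun h _ => (hπ' _).le))
    exact ⟨fun _ => ω₀, Finset.mem_univ _,
      mul_pos (hconst ω₀) (Finset.prod_pos fun h _ => hπ' _)⟩
  have key : ∀ ω : Ω, π ω ^ d * Z' = π' ω ^ d * Z := by
    intro ω
    have h := congrFun heq (fun _ => ω)
    simp only [Finset.prod_const, Finset.card_univ, Fintype.card_fin] at h
    have h2 : μ (fun _ => ω) * π ω ^ d * Z' = μ (fun _ => ω) * π' ω ^ d * Z := by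
      field_simp at h
      linarith [h]
    have hμpos := hconst ω
    have := mul_left_cancel₀ (ne_of_gt hμpos) (by ring_nf; ring_nf at h2; linarith :
      μ (fun _ => ω) * (π ω ^ d * Z') = μ (fun _ => ω) * (π' ω ^ d * Z))
    exact this
  have hdne : d ≠ 0 := by omega
  have ratio : ∀ ω : Ω, π ω * π' ω₀ = π ω₀ * π' ω := by
    intro ω
    have hpow : (π ω * π' ω₀) ^ d = (π ω₀ * π' ω) ^ d := by
      have k1 := key ω
      have k2 := key ω₀
      rw [mul_pow, mul_pow]
      have hZ'ne := ne_of_gt hZ'pos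
      have : π ω ^ d = π' ω ^ d * Z / Z' := by
        field_simp
        linarith [k1]
      rw [this]
      have : π ω₀ ^ d = π' ω₀ ^ d * Z / Z' := by
        field_simp
        linarith [k2]
      rw [this]
      ring
    have := pow_left_strictMonoOn₀ hdne |>.injOn
      (Set.mem_Ici.mpr (mul_nonneg (hπ ω).le (hπ' ω₀).le))
      (Set.mem_Ici.mpr (mul_nonneg (hπ ω₀).le (hπ' ω).le)) hpow
    exact this
  funext ω
  have hsum : (∑ ω', π ω') * π' ω₀ = π ω₀ * ∑ ω', π' ω' := by
    rw [Finset.sum_mul, Finset.mul_sum]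
    exact Finset.sum_congr rfl fun ω' _ => ratio ω'
  rw [hπsum, hπ'sum, one_mul, mul_one] at hsum
  have := ratio ω
  rw [← hsum, mul_comm (π' ω₀)] at this
  exact mul_right_cancel₀ (ne_of_gt (hπ' ω₀)) this
end

section
/- Let F : [0,1] × [0,1] → ℝ be a measurable function with |F(s,x)| ≤ 1 for all s, x. Suppose that for (Lebesgue) almost every pair (x,y) ∈ [0,1]² one has ∫₀¹ F(s,x)·F(s,y) ds = 0. Then for almost every x ∈ [0,1], ∫₀¹ F(s,x)² ds = 0, i.e. F(·,x) = 0 in L²([0,1]) for almost every x. -/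
open MeasureTheory
open scoped ENNReal

lemma aux_ae_zero {μ : Measure ℝ} [IsFiniteMeasure μ] {f : ℝ → ℝ}
    (hf : Measurable f) (hb : ∀ x, |f x| ≤ 1)
    (h : ∀ a b : ℚ, ∫ x in Set.Ioo (a : ℝ) (b : ℝ), f x ∂μ = 0) :
    f =ᵐ[μ] 0 := by
  have hof : ∀ x, ENNReal.ofReal (f x) ≤ 1 := fun x =>
    ENNReal.ofReal_le_one.2 ((le_abs_self _).trans (hb x))
  have hof' : ∀ x, ENNReal.ofReal (-f x) ≤ 1 := fun x =>
    ENNReal.ofReal_le_one.2 ((neg_le_abs _).trans (hb x))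
  set ν₁ : Measure ℝ := μ.withDensity (fun x => ENNReal.ofReal (f x)) with hν₁
  set ν₂ : Measure ℝ := μ.withDensity (fun x => ENNReal.ofReal (-f x)) with hν₂
  have hfin : ∀ (g : ℝ → ℝ≥0∞), (∀ x, g x ≤ 1) → ∀ s : Set ℝ, MeasurableSet s →
      ∫⁻ x in s, g x ∂μ ≠ ∞ := by
    intro g hg s hs
    have : ∫⁻ x in s, g x ∂μ ≤ ∫⁻ _ in s, 1 ∂μ := lintegral_mono fun x => hg x
    simp only [lintegral_one] at this
    exact (this.trans_lt (measure_lt_top _ _)).ne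
  haveI : IsFiniteMeasure ν₁ := by
    constructor
    rw [hν₁, withDensity_apply _ MeasurableSet.univ]
    exact (hfin _ hof _ MeasurableSet.univ).lt_top
  haveI : IsFiniteMeasure ν₂ := by
    constructor
    rw [hν₂, withDensity_apply _ MeasurableSet.univ]
    exact (hfin _ hof' _ MeasurableSet.univ).lt_top
  have hext : ν₁ = ν₂ := by
    apply Real.measure_ext_Ioo_rat
    intro a b
    have hInt : Integrable f (μ.restrict (Set.Ioo (a : ℝ) (b : ℝ))) := by
      refine (integrable_const (1 : ℝ)).mono' hf.aestronglyMeasurable ?_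
      exact Filter.Eventually.of_forall fun x => by simpa using hb x
    have key := integral_eq_lintegral_pos_part_sub_lintegral_neg_part hInt
    rw [h a b] at key
    have h1 : ∫⁻ x in Set.Ioo (a : ℝ) (b : ℝ), ENNReal.ofReal (f x) ∂μ ≠ ∞ :=
      hfin _ hof _ measurableSet_Ioo
    have h2 : ∫⁻ x in Set.Ioo (a : ℝ) (b : ℝ), ENNReal.ofReal (-f x) ∂μ ≠ ∞ :=
      hfin _ hof' _ measurableSet_Ioo
    have := sub_eq_zero.1 key.symm
    rw [hν₁, hν₂, withDensity_apply _ measurableSet_Ioo,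
      withDensity_apply _ measurableSet_Ioo]
    exact (ENNReal.toReal_eq_toReal_iff' h1 h2).1 this
  have hae : (fun x => ENNReal.ofReal (f x)) =ᵐ[μ] fun x => ENNReal.ofReal (-f x) := by
    rw [← withDensity_eq_iff_of_sigmaFinite (by fun_prop) (by fun_prop)]
    exact hext
  filter_upwards [hae] with x hx
  by_contra hne
  rcases lt_trichotomy (f x) 0 with hlt | heq | hgt
  · have : ENNReal.ofReal (-f x) ≠ 0 := by
      simp only [ne_eq, ENNReal.ofReal_eq_zero, not_le]
      linarith
    exact this (by rw [← hx]; simp [ENNReal.ofReal_eq_zero, hlt.le])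
  · exact hne heq
  · have : ENNReal.ofReal (f x) ≠ 0 := by
      simp only [ne_eq, ENNReal.ofReal_eq_zero, not_le]
      linarith
    exact this (by rw [hx]; simp [ENNReal.ofReal_eq_zero, hgt.le])

theorem stmt_18 (F : ℝ → ℝ → ℝ) (hmeas : Measurable (Function.uncurry F))
    (hbd : ∀ s x, |F s x| ≤ 1)
    (horth : ∀ᵐ p ∂((volume.restrict (Set.Icc (0:ℝ) 1)).prod
        (volume.restrict (Set.Icc (0:ℝ) 1))),
      ∫ s in Set.Icc (0:ℝ) 1, F s p.1 * F s p.2 = 0) :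
    ∀ᵐ x ∂(volume.restrict (Set.Icc (0:ℝ) 1)),
      ∫ s in Set.Icc (0:ℝ) 1, (F s x) ^ 2 = 0 := by
  set μ : Measure ℝ := volume.restrict (Set.Icc (0:ℝ) 1) with hμdef
  haveI : IsFiniteMeasure μ := by
    constructor
    rw [hμdef, Measure.restrict_apply_univ]
    exact measure_Icc_lt_top
  -- Step 1: for each rational interval, the corresponding integral vanishes a.e. in s.
  have step1 : ∀ q : ℚ × ℚ, ∀ᵐ s ∂μ,
      ∫ x in Set.Ioo (q.1 : ℝ) (q.2 : ℝ), F s x ∂μ = 0 := by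
    intro q
    set A : Set ℝ := Set.Ioo (q.1 : ℝ) (q.2 : ℝ) with hA
    set ν : Measure ℝ := μ.restrict A with hν
    haveI : IsFiniteMeasure ν := by
      constructor
      rw [hν, Measure.restrict_apply_univ]
      exact (measure_mono (Set.subset_univ _)).trans_lt (measure_lt_top _ _)
    set I : ℝ → ℝ := fun s => ∫ x, F s x ∂ν with hI
    have hImeas : StronglyMeasurable I :=
      hmeas.stronglyMeasurable.integral_prod_right'
    have hIbd : ∀ s, |I s| ≤ (ν Set.univ).toReal := by
      intro s
      rw [← Real.norm_eq_abs]
      calc ‖∫ x, F s x ∂ν‖ ≤ 1 * (ν Set.univ).toReal :=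
            norm_integral_le_of_norm_le_const
              (Filter.Eventually.of_forall fun x => by
                rw [Real.norm_eq_abs]; exact hbd s x)
        _ = (ν Set.univ).toReal := one_mul _
    -- product integrability
    have hIntProd : Integrable
        (Function.uncurry fun s (p : ℝ × ℝ) => F s p.1 * F s p.2) (μ.prod (ν.prod ν)) := by
      refine (integrable_const (1 : ℝ)).mono' ?_ ?_
      · apply Measurable.aestronglyMeasurable
        have m1 : Measurable fun z : ℝ × ℝ × ℝ => F z.1 z.2.1 :=
          hmeas.comp (measurable_fst.prodMk (measurable_fst.comp measurable_snd))
        have m2 : Measurable fun z : ℝ × ℝ × ℝ => F z.1 z.2.2 :=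
          hmeas.comp (measurable_fst.prodMk (measurable_snd.comp measurable_snd))
        exact m1.mul m2
      · refine Filter.Eventually.of_forall fun z => ?_
        simp only [Function.uncurry_def]
        calc ‖F z.1 z.2.1 * F z.1 z.2.2‖ = |F z.1 z.2.1| * |F z.1 z.2.2| := by
              rw [Real.norm_eq_abs, abs_mul]
          _ ≤ 1 * 1 := mul_le_mul (hbd _ _) (hbd _ _) (abs_nonneg _) zero_le_one
          _ = 1 := one_mul 1
    -- ∫ I² = 0
    have hsq : ∫ s, (I s) ^ 2 ∂μ = 0 := by
      have h1 : ∀ s, (I s) ^ 2 = ∫ p : ℝ × ℝ, F s p.1 * F s p.2 ∂(ν.prod ν) := by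
        intro s
        rw [integral_prod_mul (μ := ν) (ν := ν) (f := fun x => F s x) (g := fun y => F s y)]
        ring
      calc ∫ s, (I s) ^ 2 ∂μ
          = ∫ s, ∫ p : ℝ × ℝ, F s p.1 * F s p.2 ∂(ν.prod ν) ∂μ := by
            exact integral_congr_ae (Filter.Eventually.of_forall fun s => h1 s)
        _ = ∫ p : ℝ × ℝ, ∫ s, F s p.1 * F s p.2 ∂μ ∂(ν.prod ν) :=
            integral_integral_swap hIntProd
        _ = 0 := by
            apply integral_eq_zero_of_ae
            have hprod : ν.prod ν = (μ.prod μ).restrict (A ×ˢ A) := by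
              rw [hν, Measure.prod_restrict]
            rw [hprod]
            exact ae_restrict_of_ae horth
    -- conclude I = 0 a.e.
    have hIint : Integrable (fun s => (I s) ^ 2) μ := by
      refine (integrable_const ((ν Set.univ).toReal ^ 2)).mono'
        ((hImeas.measurable.pow_const 2).aestronglyMeasurable) ?_
      refine Filter.Eventually.of_forall fun s => ?_
      rw [Real.norm_eq_abs, abs_pow]
      exact pow_le_pow_left₀ (abs_nonneg _) (hIbd s) 2
    have := (integral_eq_zero_iff_of_nonneg_ae
      (Filter.Eventually.of_forall fun s => sq_nonneg (I s)) hIint).1 hsq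
    filter_upwards [this] with s hs
    exact pow_eq_zero_iff two_ne_zero |>.mp hs
  have step1' : ∀ᵐ s ∂μ, ∀ q : ℚ × ℚ,
      ∫ x in Set.Ioo (q.1 : ℝ) (q.2 : ℝ), F s x ∂μ = 0 := (ae_all_iff).2 step1
  -- Step 2: a.e. s, the slice F s · vanishes μ-a.e., hence its square integral is 0.
  have step2 : ∀ᵐ s ∂μ, ∫ x, (F s x) ^ 2 ∂μ = 0 := by
    filter_upwards [step1'] with s hs
    have hzero : (fun x => F s x) =ᵐ[μ] 0 := by
      apply aux_ae_zero (μ := μ) (f := fun x => F s x)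
        (hmeas.comp (measurable_prodMk_left)) (hbd s)
      intro a b
      exact hs (a, b)
    apply integral_eq_zero_of_ae
    filter_upwards [hzero] with x hx
    simp [hx]
  -- Step 3: swap integrals by Fubini.
  have hIntProd2 : Integrable
      (Function.uncurry fun s x => (F s x) ^ 2) (μ.prod μ) := by
    refine (integrable_const (1 : ℝ)).mono' ?_ ?_
    · have : Measurable fun z : ℝ × ℝ => (F z.1 z.2) ^ 2 := hmeas.pow_const 2
      apply Measurable.aestronglyMeasurable
      simpa [Function.uncurry_def] using this
    · refine Filter.Eventually.of_forall fun z => ?_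
      simp only [Function.uncurry_def]
      rw [Real.norm_eq_abs, abs_pow]
      calc |F z.1 z.2| ^ 2 ≤ 1 ^ 2 := pow_le_pow_left₀ (abs_nonneg _) (hbd _ _) 2
        _ = 1 := one_pow 2
  have hswap : ∫ x, ∫ s, (F s x) ^ 2 ∂μ ∂μ = 0 := by
    rw [← integral_integral_swap hIntProd2]
    exact integral_eq_zero_of_ae step2
  set J : ℝ → ℝ := fun x => ∫ s, (F s x) ^ 2 ∂μ with hJ
  have hJmeas : StronglyMeasurable J :=
    (hmeas.pow_const 2).stronglyMeasurable.integral_prod_left'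
  have hJint : Integrable J μ := by
    refine (integrable_const ((μ Set.univ).toReal)).mono' hJmeas.aestronglyMeasurable ?_
    refine Filter.Eventually.of_forall fun x => ?_
    calc ‖∫ s, (F s x) ^ 2 ∂μ‖ ≤ 1 * (μ Set.univ).toReal :=
        norm_integral_le_of_norm_le_const (Filter.Eventually.of_forall fun s => by
          rw [Real.norm_eq_abs, abs_pow]
          calc |F s x| ^ 2 ≤ 1 ^ 2 := pow_le_pow_left₀ (abs_nonneg _) (hbd _ _) 2
            _ = 1 := one_pow 2)
      _ = (μ Set.univ).toReal := one_mul _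
  have hJnn : 0 ≤ᵐ[μ] J := Filter.Eventually.of_forall fun x =>
    integral_nonneg fun s => sq_nonneg _
  have := (integral_eq_zero_iff_of_nonneg_ae hJnn hJint).1 hswap
  filter_upwards [this] with x hx
  exact hx
end
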